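/- Let T = (V, A) be a polytree and let X, Y ⊆ V with |X| = |Y|. There exists a directed path matching from X to Y (a family of directed paths with distinct sources forming X and distinct sinks forming Y) if and only if for every arc e ∈ A, w(e; X, Y) := |C⁻_e ∩ X| − |C⁻_e ∩ Y| ≥ 0. -/

import Mathlib

open scoped Classical

variable {V : Type*}

/-- The underlying undirected simple graph of a digraph given by its arc relation. -/
def underlying (A : V → V → Prop) : SimpleGraph V := SimpleGraph.fromRel A

/-- A polytree: a loopless digraph without antiparallel arcs whose underlying graph is a tree. -/
def IsPolytree (A : V → V → Prop) : Prop :=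
  (∀ v, ¬ A v v) ∧ (∀ u v, A u v → ¬ A v u) ∧ (underlying A).IsTree

/-- `x` lies in the weakly connected component of `T - (a,b)` containing the tail `a`. -/
def InCminus (A : V → V → Prop) (a b x : V) : Prop :=
  ((underlying A).deleteEdges {s(a, b)}).Reachable a x

/-- `w((a,b); X, Y) = |C⁻ ∩ X| - |C⁻ ∩ Y|`. -/
noncomputable def wArc [Fintype V] [DecidableEq V] (A : V → V → Prop)
    (X Y : Finset V) (a b : V) : ℤ :=
  ((X.filter fun x => InCminus A a b x).card : ℤ) -
    ((Y.filter fun x => InCminus A a b x).card : ℤ)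

/-- Independence in the underlying undirected graph. -/
def IndepF (A : V → V → Prop) (I : Finset V) : Prop :=
  ∀ u ∈ I, ∀ v ∈ I, ¬ (underlying A).Adj u v

/-- One token-sliding step along an arc, in its direction. -/
def IsStep [DecidableEq V] (A : V → V → Prop) (I J : Finset V) : Prop :=
  ∃ u v, A u v ∧ I \ J = {u} ∧ J \ I = {v}

/-- A reconfiguration sequence of independent sets under directed token sliding. -/
def IsReconfSeq [DecidableEq V] (A : V → V → Prop) {ℓ : ℕ}
    (f : Fin (ℓ + 1) → Finset V) : Prop :=
  (∀ i, IndepF A (f i)) ∧ ∀ i : Fin ℓ, IsStep A (f i.castSucc) (f i.succ)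

/-- `I` is reconfigurable into `J` under directed token sliding. -/
def Reconfigurable [DecidableEq V] (A : V → V → Prop) (I J : Finset V) : Prop :=
  ∃ (ℓ : ℕ) (f : Fin (ℓ + 1) → Finset V),
    IsReconfSeq A f ∧ f 0 = I ∧ f (Fin.last ℓ) = J

/-- A directed path in the digraph `A`, given by its (distinct) vertices in order. -/
structure DirPath (A : V → V → Prop) where
  len : ℕ
  vtx : Fin (len + 1) → V
  inj : Function.Injective vtx
  arc : ∀ i : Fin len, A (vtx i.castSucc) (vtx i.succ)

namespace DirPath
variable {A : V → V → Prop}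
/-- The source of a directed path. -/
def src (p : DirPath A) : V := p.vtx 0
/-- The sink of a directed path. -/
def snk (p : DirPath A) : V := p.vtx (Fin.last p.len)
/-- The second vertex `s'(P)` of a directed path. -/
def sndVtx (p : DirPath A) : V := p.vtx ⟨min 1 p.len, by omega⟩
/-- The second-to-last vertex `t'(P)` of a directed path. -/
def penVtx (p : DirPath A) : V := p.vtx ⟨p.len - 1, by omega⟩
/-- `v` is a vertex of the path `p`. -/
def mem (p : DirPath A) (v : V) : Prop := ∃ i, p.vtx i = v
/-- `x` is an internal vertex of `p` (neither source nor sink). -/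
def internal (p : DirPath A) (x : V) : Prop :=
  ∃ i : Fin (p.len + 1), p.vtx i = x ∧ i ≠ 0 ∧ i ≠ Fin.last p.len
end DirPath

/-- A directed path matching from `X` to `Y`: distinct sources forming `X`,
distinct sinks forming `Y`. -/
def IsDPM [DecidableEq V] {A : V → V → Prop} {k : ℕ}
    (X Y : Finset V) (P : Fin k → DirPath A) : Prop :=
  (Function.Injective fun i => (P i).src) ∧ (Function.Injective fun i => (P i).snk) ∧
  (Finset.univ.image fun i => (P i).src) = X ∧ (Finset.univ.image fun i => (P i).snk) = Y

/-- The path-set conditions (P1)–(P4). -/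
def PathSetConds [DecidableEq V] {A : V → V → Prop} {k : ℕ}
    (X Y : Finset V) (P : Fin k → DirPath A) : Prop :=
  (∀ i, 2 ≤ (P i).len) ∧ IsDPM X Y P ∧
  (∀ i j, i ≠ j → (P i).sndVtx ≠ (P j).sndVtx) ∧
  (∀ i j, i ≠ j → (P i).penVtx ≠ (P j).penVtx)

/-- Length of the (unique, when it exists) directed path from `u` to `v`. -/
noncomputable def ddist (A : V → V → Prop) (u v : V) : ℕ :=
  sInf {n | ∃ p : DirPath A, p.src = u ∧ p.snk = v ∧ p.len = n}

/-- A biased path pair: a common internal vertex `x` with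
`dist(s(p),x) > dist(s(q),x)` and `dist(x,t(p)) > dist(x,t(q))`. -/
def BiasedPair (A : V → V → Prop) (p q : DirPath A) : Prop :=
  ∃ x, p.internal x ∧ q.internal x ∧
    ddist A q.src x < ddist A p.src x ∧ ddist A x q.snk < ddist A x p.snk

/-- A rigid token: `v ∈ X ∩ Y` and all incident arcs have `w`-value `0`. -/
def RigidTok [Fintype V] [DecidableEq V] (A : V → V → Prop) (X Y : Finset V) (v : V) : Prop :=
  v ∈ X ∧ v ∈ Y ∧ ∀ a b, A a b → (a = v ∨ b = v) → wArc A X Y a b = 0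

/-- A blocking arc: `w((u,v)) = 1` and every other arc incident to `u` or `v`
has `w`-value `0`. -/
def BlockingArc [Fintype V] [DecidableEq V] (A : V → V → Prop) (X Y : Finset V)
    (u v : V) : Prop :=
  A u v ∧ wArc A X Y u v = 1 ∧
    ∀ a b, A a b → (a, b) ≠ (u, v) → (a = u ∨ b = u ∨ a = v ∨ b = v) →
      wArc A X Y a b = 0

/-- A trajectory of a single token along a reconfiguration sequence. -/
def IsTrajectory [DecidableEq V] (A : V → V → Prop) {ℓ : ℕ}
    (f : Fin (ℓ + 1) → Finset V) (g : Fin (ℓ + 1) → V) : Prop :=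
  (∀ i, g i ∈ f i) ∧ ∀ i : Fin ℓ,
    g i.succ = g i.castSucc ∨
      (f i.castSucc \ f i.succ = {g i.castSucc} ∧ f i.succ \ f i.castSucc = {g i.succ})

/-- Number of steps of a reconfiguration sequence sliding a token from `u` to `v`. -/
noncomputable def movesAlong [DecidableEq V] {ℓ : ℕ} (f : Fin (ℓ + 1) → Finset V)
    (u v : V) : ℕ :=
  (Finset.univ.filter fun i : Fin ℓ =>
    f i.castSucc \ f i.succ = {u} ∧ f i.succ \ f i.castSucc = {v}).card

/-- Number of forward arc traversals of a walk with vertex list `l`. -/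
noncomputable def fwdCount (A : V → V → Prop) (l : List V) : ℕ :=
  (l.zip l.tail).countP fun p => decide (A p.1 p.2)

/-- Number of reverse arc traversals of a walk with vertex list `l`. -/
noncomputable def revCount (A : V → V → Prop) (l : List V) : ℕ :=
  (l.zip l.tail).countP fun p => decide (A p.2 p.1)

/-- Number of traversals of the ordered pair `(a, b)` by a walk with vertex list `l`. -/
def traverseCount [DecidableEq V] (l : List V) (a b : V) : ℕ :=
  (l.zip l.tail).count (a, b)

/-- A vertex `v` touches a directed path `p` if `N[v]` meets the vertex set of `p`. -/
def Touches (A : V → V → Prop) (v : V) (p : DirPath A) : Prop :=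
  ∃ u, p.mem u ∧ (u = v ∨ (underlying A).Adj v u)

/-- Independence in an undirected graph (for undirected token sliding). -/
def UIndep (G : SimpleGraph V) (I : Finset V) : Prop :=
  ∀ u ∈ I, ∀ v ∈ I, ¬ G.Adj u v

/-- One undirected token-sliding step along an edge. -/
def UIsStep [DecidableEq V] (G : SimpleGraph V) (I J : Finset V) : Prop :=
  ∃ u v, G.Adj u v ∧ I \ J = {u} ∧ J \ I = {v}

/-- Reconfigurability under (undirected) token sliding. -/
def UReconfigurable [DecidableEq V] (G : SimpleGraph V) (I J : Finset V) : Prop :=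
  ∃ (ℓ : ℕ) (f : Fin (ℓ + 1) → Finset V),
    (∀ i, UIndep G (f i)) ∧ (∀ i : Fin ℓ, UIsStep G (f i.castSucc) (f i.succ)) ∧
    f 0 = I ∧ f (Fin.last ℓ) = J

section PolytreeAux

open SimpleGraph Finset

variable {A : V → V → Prop}

lemma pt_adj_of_arc (hT : IsPolytree A) {u v : V} (h : A u v) : (underlying A).Adj u v := by
  rw [underlying, SimpleGraph.fromRel_adj]
  exact ⟨fun he => hT.1 v (he ▸ h), Or.inl h⟩

lemma pt_arc_cases (h : (underlying A).Adj u v) : A u v ∨ A v u := by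
  rw [underlying, SimpleGraph.fromRel_adj] at h; exact h.2

lemma pt_not_reach_del (hT : IsPolytree A) {u v : V} (h : (underlying A).Adj u v) :
    ¬ ((underlying A).deleteEdges {s(u, v)}).Reachable u v := by
  have hb := (SimpleGraph.isAcyclic_iff_forall_adj_isBridge.mp hT.2.2.IsAcyclic) h
  exact SimpleGraph.isBridge_iff.mp hb

private lemma pt_walk_del_total {G : SimpleGraph V} {a b : V} :
    ∀ {c x : V}, G.Walk c x →
      (G.deleteEdges {s(a, b)}).Reachable c x ∨ (G.deleteEdges {s(a, b)}).Reachable a x ∨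
        (G.deleteEdges {s(a, b)}).Reachable b x := by
  intro c x w
  induction w with
  | nil => exact Or.inl (SimpleGraph.Reachable.refl _)
  | @cons c d x h p ih =>
    by_cases he : s(c, d) = s(a, b)
    · rcases Sym2.eq_iff.mp he with ⟨rfl, rfl⟩ | ⟨rfl, rfl⟩
      · rcases ih with h1 | h1 | h1
        · exact Or.inr (Or.inr h1)
        · exact Or.inr (Or.inl h1)
        · exact Or.inr (Or.inr h1)
      · rcases ih with h1 | h1 | h1
        · exact Or.inr (Or.inl h1)
        · exact Or.inr (Or.inl h1)
        · exact Or.inr (Or.inr h1)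
    · have hadj : (G.deleteEdges {s(a, b)}).Adj c d := by
        rw [SimpleGraph.deleteEdges_adj]
        exact ⟨h, by simpa using he⟩
      rcases ih with h1 | h1 | h1
      · exact Or.inl (hadj.reachable.trans h1)
      · exact Or.inr (Or.inl h1)
      · exact Or.inr (Or.inr h1)

lemma pt_reach_del_total (hT : IsPolytree A) {a b : V} (x : V) :
    ((underlying A).deleteEdges {s(a, b)}).Reachable a x ∨
      ((underlying A).deleteEdges {s(a, b)}).Reachable b x := by
  obtain ⟨w⟩ := hT.2.2.isConnected.preconnected a x
  rcases pt_walk_del_total (a := a) (b := b) w with h | h | h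
  · exact Or.inl h
  · exact Or.inl h
  · exact Or.inr h

lemma pt_reach_del_not_both (hT : IsPolytree A) {a b : V} (h : (underlying A).Adj a b) {x : V}
    (h1 : ((underlying A).deleteEdges {s(a, b)}).Reachable a x)
    (h2 : ((underlying A).deleteEdges {s(a, b)}).Reachable b x) : False :=
  pt_not_reach_del hT h (h1.trans h2.symm)

/-- `x` lies on the `u`-side of the edge `{v,u}`. -/
def PtSide (A : V → V → Prop) (v u x : V) : Prop :=
  ((underlying A).deleteEdges {s(v, u)}).Reachable u x

lemma pt_side_not_self (hT : IsPolytree A) {v u : V} (h : (underlying A).Adj v u) :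
    ¬ PtSide A v u v := fun hs => pt_not_reach_del hT h hs.symm

lemma pt_side_iff_inc {u v x : V} : PtSide A v u x ↔ InCminus A u v x := by
  rw [PtSide, InCminus, Sym2.eq_swap]

lemma pt_side_exists (hT : IsPolytree A) {v x : V} (hx : x ≠ v) :
    ∃ u, (underlying A).Adj v u ∧ PtSide A v u x := by
  obtain ⟨w⟩ := hT.2.2.isConnected.preconnected v x
  obtain ⟨p, hp⟩ := w.toPath
  obtain ⟨u, h, q, rfl⟩ := SimpleGraph.Walk.exists_eq_cons_of_ne hx.symm p
  rw [SimpleGraph.Walk.cons_isPath_iff] at hp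
  refine ⟨u, h, ⟨q.toDeleteEdges _ (fun e he hmem => hp.2 ?_)⟩⟩
  rw [Set.mem_singleton_iff] at hmem
  subst hmem
  exact q.fst_mem_support_of_mem_edges he

lemma pt_side_unique (hT : IsPolytree A) {v u u' x : V}
    (h1 : (underlying A).Adj v u) (h2 : (underlying A).Adj v u')
    (s1 : PtSide A v u x) (s2 : PtSide A v u' x) : u = u' := by
  have hx : x ≠ v := fun h => pt_side_not_self hT h1 (h ▸ s1)
  obtain ⟨w⟩ := hT.2.2.isConnected.preconnected v x
  obtain ⟨p, hp⟩ := w.toPath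
  obtain ⟨t, ht, q, rfl⟩ := SimpleGraph.Walk.exists_eq_cons_of_ne hx.symm p
  rw [SimpleGraph.Walk.cons_isPath_iff] at hp
  have key : ∀ u₀, (underlying A).Adj v u₀ → PtSide A v u₀ x → u₀ = t := by
    intro u₀ ha hs
    by_cases hmem : s(v, u₀) ∈ (SimpleGraph.Walk.cons ht q).edges
    · rw [SimpleGraph.Walk.edges_cons, List.mem_cons] at hmem
      rcases hmem with hq | hq
      · rcases Sym2.eq_iff.mp hq with ⟨-, h⟩ | ⟨-, h⟩
        · exact h
        · exact absurd h ha.ne'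
      · exact absurd (q.fst_mem_support_of_mem_edges hq) hp.2
    · have hreach : ((underlying A).deleteEdges {s(v, u₀)}).Reachable v x :=
        ⟨(SimpleGraph.Walk.cons ht q).toDeleteEdges _
          (fun e he hm => hmem (by rwa [Set.mem_singleton_iff.mp hm] at he))⟩
      exact absurd hs (fun hs' => pt_reach_del_not_both hT ha hreach hs')
  rw [key u h1 s1, key u' h2 s2]

lemma pt_not_side_iff (hT : IsPolytree A) {v u : V} (h : (underlying A).Adj v u) (x : V) :
    ¬ PtSide A v u x ↔ ((underlying A).deleteEdges {s(v, u)}).Reachable v x := by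
  constructor
  · intro hn
    rcases pt_reach_del_total hT (a := v) (b := u) x with h1 | h1
    · exact h1
    · exact absurd h1 hn
  · intro hr hs
    exact pt_reach_del_not_both hT h hr hs

/-- The unique neighbor of `v` on whose side `x` lies. -/
noncomputable def ptSideNbr (A : V → V → Prop) (v x : V) : V :=
  if h : ∃ u, (underlying A).Adj v u ∧ PtSide A v u x then h.choose else v

end PolytreeAux


section PolytreeAux2

open SimpleGraph Finset

variable {A : V → V → Prop}

lemma ptSideNbr_spec (hT : IsPolytree A) {v x : V} (hx : x ≠ v) :
    (underlying A).Adj v (ptSideNbr A v x) ∧ PtSide A v (ptSideNbr A v x) x := by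
  rw [ptSideNbr, dif_pos (pt_side_exists hT hx)]
  exact (pt_side_exists hT hx).choose_spec

variable [Fintype V] [DecidableEq V]

lemma pt_filter_sideNbr (hT : IsPolytree A) (Z : Finset V) (v u : V)
    (hu : (underlying A).Adj v u) :
    (Z.erase v).filter (fun x => ptSideNbr A v x = u) = Z.filter (fun x => PtSide A v u x) := by
  ext x
  simp only [Finset.mem_filter, Finset.mem_erase]
  constructor
  · rintro ⟨⟨hxv, hxZ⟩, rfl⟩
    exact ⟨hxZ, (ptSideNbr_spec hT hxv).2⟩
  · rintro ⟨hxZ, hs⟩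
    have hxv : x ≠ v := fun h => pt_side_not_self hT hu (h ▸ hs)
    exact ⟨⟨hxv, hxZ⟩,
      pt_side_unique hT (ptSideNbr_spec hT hxv).1 hu (ptSideNbr_spec hT hxv).2 hs⟩

lemma pt_card_partition (hT : IsPolytree A) (Z : Finset V) (v : V) :
    (Z.erase v).card = ∑ u ∈ (underlying A).neighborFinset v,
      (Z.filter (fun x => PtSide A v u x)).card := by
  rw [Finset.card_eq_sum_card_fiberwise (f := ptSideNbr A v)
    (t := (underlying A).neighborFinset v) (fun x hx => by
      rw [Finset.mem_coe, SimpleGraph.mem_neighborFinset]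
      exact (ptSideNbr_spec hT (Finset.ne_of_mem_erase (Finset.mem_coe.mp hx))).1)]
  exact Finset.sum_congr rfl fun u hu => by
    rw [pt_filter_sideNbr hT Z v u ((SimpleGraph.mem_neighborFinset _ _ _).mp hu)]

lemma pt_sum_side_int (hT : IsPolytree A) (X Y : Finset V) (hXY : X.card = Y.card) (v : V) :
    ∑ u ∈ (underlying A).neighborFinset v,
      (((X.filter (fun x => PtSide A v u x)).card : ℤ) -
        ((Y.filter (fun x => PtSide A v u x)).card : ℤ)) =
      (if v ∈ Y then 1 else 0) - (if v ∈ X then 1 else 0) := by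
  rw [Finset.sum_sub_distrib]
  have hX := pt_card_partition hT X v
  have hY := pt_card_partition hT Y v
  have h1 : ∑ u ∈ (underlying A).neighborFinset v,
      ((X.filter (fun x => PtSide A v u x)).card : ℤ) = ((X.erase v).card : ℤ) := by
    rw [hX]; push_cast; rfl
  have h2 : ∑ u ∈ (underlying A).neighborFinset v,
      ((Y.filter (fun x => PtSide A v u x)).card : ℤ) = ((Y.erase v).card : ℤ) := by
    rw [hY]; push_cast; rfl
  rw [h1, h2]
  by_cases hvX : v ∈ X <;> by_cases hvY : v ∈ Y
  · rw [Finset.card_erase_of_mem hvX, Finset.card_erase_of_mem hvY, if_pos hvX, if_pos hvY]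
    have c1 : 1 ≤ X.card := Finset.one_le_card.mpr ⟨v, hvX⟩
    have c2 : 1 ≤ Y.card := Finset.one_le_card.mpr ⟨v, hvY⟩
    omega
  · rw [Finset.card_erase_of_mem hvX, Finset.erase_eq_of_notMem hvY, if_pos hvX, if_neg hvY]
    have c1 : 1 ≤ X.card := Finset.one_le_card.mpr ⟨v, hvX⟩
    omega
  · rw [Finset.erase_eq_of_notMem hvX, Finset.card_erase_of_mem hvY, if_neg hvX, if_pos hvY]
    have c2 : 1 ≤ Y.card := Finset.one_le_card.mpr ⟨v, hvY⟩
    omega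
  · rw [Finset.erase_eq_of_notMem hvX, Finset.erase_eq_of_notMem hvY, if_neg hvX, if_neg hvY]
    omega

lemma pt_dd_eq_w_in (X Y : Finset V) {u v : V} :
    ((X.filter (fun x => PtSide A v u x)).card : ℤ) -
      ((Y.filter (fun x => PtSide A v u x)).card : ℤ) = wArc A X Y u v := by
  have hx : X.filter (fun x => PtSide A v u x) = X.filter (fun x => InCminus A u v x) :=
    Finset.filter_congr (fun x _ => by rw [pt_side_iff_inc])
  have hy : Y.filter (fun x => PtSide A v u x) = Y.filter (fun x => InCminus A u v x) :=
    Finset.filter_congr (fun x _ => by rw [pt_side_iff_inc])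
  rw [wArc, hx, hy]

lemma pt_dd_eq_w_out (hT : IsPolytree A) (X Y : Finset V) (hXY : X.card = Y.card) {u v : V}
    (h : A v u) :
    ((X.filter (fun x => PtSide A v u x)).card : ℤ) -
      ((Y.filter (fun x => PtSide A v u x)).card : ℤ) = - wArc A X Y v u := by
  have hadj := pt_adj_of_arc hT h
  have hXc : (X.filter (fun x => PtSide A v u x)).card +
      (X.filter (fun x => InCminus A v u x)).card = X.card := by
    have h0 := Finset.card_filter_add_card_filter_not
      (s := X) (p := fun x => PtSide A v u x)
    have h1 : X.filter (fun x => ¬ PtSide A v u x) = X.filter (fun x => InCminus A v u x) :=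
      Finset.filter_congr (fun x _ => by rw [pt_not_side_iff hT hadj]; exact Iff.rfl)
    rw [h1] at h0
    exact h0
  have hYc : (Y.filter (fun x => PtSide A v u x)).card +
      (Y.filter (fun x => InCminus A v u x)).card = Y.card := by
    have h0 := Finset.card_filter_add_card_filter_not
      (s := Y) (p := fun x => PtSide A v u x)
    have h1 : Y.filter (fun x => ¬ PtSide A v u x) = Y.filter (fun x => InCminus A v u x) :=
      Finset.filter_congr (fun x _ => by rw [pt_not_side_iff hT hadj]; exact Iff.rfl)
    rw [h1] at h0
    exact h0
  rw [wArc]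
  omega

lemma pt_exists_in_arc_top (hT : IsPolytree A) {X Y : Finset V} (hXY : X.card = Y.card)
    {v : V} (hvX : v ∉ X) (hvY : v ∈ Y)
    (hw : ∀ a b, A a b → 0 ≤ wArc A X Y a b) :
    ∃ u, A u v ∧ 1 ≤ wArc A X Y u v := by
  have hsum := pt_sum_side_int hT X Y hXY v
  rw [if_pos hvY, if_neg hvX] at hsum
  have hex : ∃ u ∈ (underlying A).neighborFinset v,
      0 < ((X.filter (fun x => PtSide A v u x)).card : ℤ) -
        ((Y.filter (fun x => PtSide A v u x)).card : ℤ) := by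
    by_contra hc
    push_neg at hc
    have hle := Finset.sum_nonpos hc
    rw [hsum] at hle
    norm_num at hle
  obtain ⟨u, hu, hdd⟩ := hex
  have hadj := (SimpleGraph.mem_neighborFinset _ _ _).mp hu
  rcases pt_arc_cases hadj with hvu | huv
  · exfalso
    rw [pt_dd_eq_w_out hT X Y hXY hvu] at hdd
    have := hw v u hvu
    omega
  · refine ⟨u, huv, ?_⟩
    rw [pt_dd_eq_w_in X Y] at hdd
    omega

lemma pt_exists_in_arc_sub (hT : IsPolytree A) {X Y : Finset V} (hXY : X.card = Y.card)
    {v b : V} (hvX : v ∉ X) (hb : A v b) (hwb : 1 ≤ wArc A X Y v b)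
    (hw : ∀ a b, A a b → 0 ≤ wArc A X Y a b) :
    ∃ u, A u v ∧ 1 ≤ wArc A X Y u v := by
  have hsum := pt_sum_side_int hT X Y hXY v
  rw [if_neg hvX] at hsum
  have hbmem : b ∈ (underlying A).neighborFinset v :=
    (SimpleGraph.mem_neighborFinset _ _ _).mpr (pt_adj_of_arc hT hb)
  rw [← Finset.add_sum_erase _ _ hbmem] at hsum
  have hddb : ((X.filter (fun x => PtSide A v b x)).card : ℤ) -
      ((Y.filter (fun x => PtSide A v b x)).card : ℤ) = - wArc A X Y v b :=
    pt_dd_eq_w_out hT X Y hXY hb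
  have hex : ∃ u ∈ ((underlying A).neighborFinset v).erase b,
      0 < ((X.filter (fun x => PtSide A v u x)).card : ℤ) -
        ((Y.filter (fun x => PtSide A v u x)).card : ℤ) := by
    by_contra hc
    push_neg at hc
    have hle := Finset.sum_nonpos hc
    have h0 : (0:ℤ) ≤ if v ∈ Y then 1 else 0 := by split_ifs <;> norm_num
    omega
  obtain ⟨u, hu, hdd⟩ := hex
  have hadj := (SimpleGraph.mem_neighborFinset _ _ _).mp (Finset.mem_of_mem_erase hu)
  rcases pt_arc_cases hadj with hvu | huv
  · exfalso
    rw [pt_dd_eq_w_out hT X Y hXY hvu] at hdd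
    have := hw v u hvu
    omega
  · refine ⟨u, huv, ?_⟩
    rw [pt_dd_eq_w_in X Y] at hdd
    omega

end PolytreeAux2


section PolytreeAux3

open SimpleGraph Finset

variable {A : V → V → Prop}

lemma pt_inc_refl (a b : V) : InCminus A a b a := SimpleGraph.Reachable.refl a

lemma pt_arc_mono (hT : IsPolytree A) {a b u v : V} (hab : A a b) (huv : A u v)
    (hv : InCminus A a b v) : InCminus A a b u := by
  by_cases he : s(u, v) = s(a, b)
  · rcases Sym2.eq_iff.mp he with ⟨h1, h2⟩ | ⟨h1, h2⟩
    · rw [h1]; exact pt_inc_refl _ _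
    · exact absurd (h2 ▸ h1 ▸ huv) (hT.2.1 _ _ hab)
  · have hadj : ((underlying A).deleteEdges {s(a, b)}).Adj u v := by
      rw [SimpleGraph.deleteEdges_adj]
      exact ⟨pt_adj_of_arc hT huv, by simpa using he⟩
    exact hv.trans hadj.symm.reachable

lemma pt_arc_cross (hT : IsPolytree A) {a b u v : V} (hab : A a b) (huv : A u v)
    (hu : InCminus A a b u) (hv : ¬ InCminus A a b v) : u = a ∧ v = b := by
  by_cases he : s(u, v) = s(a, b)
  · rcases Sym2.eq_iff.mp he with ⟨h1, h2⟩ | ⟨h1, h2⟩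
    · exact ⟨h1, h2⟩
    · exact absurd (h2 ▸ h1 ▸ huv) (hT.2.1 _ _ hab)
  · exfalso
    have hadj : ((underlying A).deleteEdges {s(a, b)}).Adj u v := by
      rw [SimpleGraph.deleteEdges_adj]
      exact ⟨pt_adj_of_arc hT huv, by simpa using he⟩
    exact hv (hu.trans hadj.reachable)

lemma pt_inc_subset (hT : IsPolytree A) {u v t : V} (huv : A u v) (htu : A t u) (htv : t ≠ v) :
    ∀ x, InCminus A t u x → InCminus A u v x := by
  intro x hx
  by_contra hncon
  have hside1 : PtSide A u t x := by
    show ((underlying A).deleteEdges {s(u, t)}).Reachable t x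
    rw [Sym2.eq_swap]
    exact hx
  have hside2 : PtSide A u v x := by
    rcases pt_reach_del_total hT (a := u) (b := v) x with h1 | h1
    · exact absurd h1 hncon
    · exact h1
  exact htv (pt_side_unique hT (pt_adj_of_arc hT htu).symm (pt_adj_of_arc hT huv) hside1 hside2)

lemma pt_path_inc_down (hT : IsPolytree A) {a b : V} (hab : A a b) (p : DirPath A) :
    ∀ n (hn : n < p.len + 1), InCminus A a b (p.vtx ⟨n, hn⟩) → InCminus A a b p.src
  | 0, _, h => h
  | (m + 1), hn, h => by
      have hm : m < p.len := by omega
      exact pt_path_inc_down hT hab p m (by omega)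
        (pt_arc_mono hT hab (p.arc ⟨m, hm⟩) h)

lemma pt_path_inc_src (hT : IsPolytree A) {a b : V} (hab : A a b) (p : DirPath A)
    (h : InCminus A a b p.snk) : InCminus A a b p.src :=
  pt_path_inc_down hT hab p p.len (by omega) h

lemma pt_path_cross_aux (hT : IsPolytree A) {a b : V} (hab : A a b) (p : DirPath A) :
    ∀ n (hn : n < p.len + 1), InCminus A a b p.src → ¬ InCminus A a b (p.vtx ⟨n, hn⟩) →
      ∃ i : Fin p.len, p.vtx i.castSucc = a ∧ p.vtx i.succ = b
  | 0, _, h0, h => absurd h0 h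
  | (m + 1), hn, h0, h => by
      have hm : m < p.len := by omega
      by_cases hc : InCminus A a b (p.vtx ⟨m, by omega⟩)
      · exact ⟨⟨m, hm⟩, (pt_arc_cross hT hab (p.arc ⟨m, hm⟩) hc h).1,
          (pt_arc_cross hT hab (p.arc ⟨m, hm⟩) hc h).2⟩
      · exact pt_path_cross_aux hT hab p m (by omega) h0 hc

lemma pt_path_cross (hT : IsPolytree A) {a b : V} (hab : A a b) (p : DirPath A)
    (hs : InCminus A a b p.src) (ht : ¬ InCminus A a b p.snk) :
    ∃ i : Fin p.len, p.vtx i.castSucc = a ∧ p.vtx i.succ = b :=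
  pt_path_cross_aux hT hab p p.len (by omega) hs ht

/-- The one-vertex directed path. -/
def DirPath.single (A : V → V → Prop) (y : V) : DirPath A where
  len := 0
  vtx := fun _ => y
  inj := fun i j _ => Fin.ext (by omega)
  arc := fun i => i.elim0

@[simp] lemma DirPath.single_src (y : V) : (DirPath.single A y).src = y := rfl
@[simp] lemma DirPath.single_snk (y : V) : (DirPath.single A y).snk = y := rfl

/-- Extend a directed path by one arc at the end. -/
def DirPath.snocP (p : DirPath A) (a : V) (ha : A (p.vtx (Fin.last p.len)) a)
    (hni : ∀ i, p.vtx i ≠ a) : DirPath A where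
  len := p.len + 1
  vtx := Fin.snoc p.vtx a
  inj := by
    intro i j hij
    induction i using Fin.lastCases with
    | last =>
      induction j using Fin.lastCases with
      | last => rfl
      | cast j =>
        rw [Fin.snoc_last, Fin.snoc_castSucc] at hij
        exact absurd hij.symm (hni j)
    | cast i =>
      induction j using Fin.lastCases with
      | last =>
        rw [Fin.snoc_last, Fin.snoc_castSucc] at hij
        exact absurd hij (hni i)
      | cast j =>
        rw [Fin.snoc_castSucc, Fin.snoc_castSucc] at hij
        rw [p.inj hij]
  arc := by
    intro i
    induction i using Fin.lastCases with
    | last =>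
      rw [Fin.succ_last, Fin.snoc_last, Fin.snoc_castSucc]
      exact ha
    | cast j =>
      rw [Fin.succ_castSucc, Fin.snoc_castSucc, Fin.snoc_castSucc]
      exact p.arc j

lemma DirPath.snocP_src (p : DirPath A) (a : V) (ha : A (p.vtx (Fin.last p.len)) a)
    (hni : ∀ i, p.vtx i ≠ a) : (p.snocP a ha hni).src = p.src := by
  simp only [DirPath.src, DirPath.snocP]
  show Fin.snoc (α := fun _ => V) p.vtx a ((0 : Fin (p.len + 1)).castSucc) = p.vtx 0
  rw [Fin.snoc_castSucc]

lemma DirPath.snocP_snk (p : DirPath A) (a : V) (ha : A (p.vtx (Fin.last p.len)) a)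
    (hni : ∀ i, p.vtx i ≠ a) : (p.snocP a ha hni).snk = a := by
  simp only [DirPath.snk, DirPath.snocP]
  rw [Fin.snoc_last]

lemma DirPath.snocP_vtx (p : DirPath A) (a : V) (ha : A (p.vtx (Fin.last p.len)) a)
    (hni : ∀ i, p.vtx i ≠ a) (i : Fin (p.len + 1 + 1)) :
    (∃ j, (p.snocP a ha hni).vtx i = p.vtx j) ∨ (p.snocP a ha hni).vtx i = a := by
  induction i using Fin.lastCases with
  | last =>
    right
    simp only [DirPath.snocP]
    rw [Fin.snoc_last]
  | cast j =>
    left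
    exact ⟨j, by simp only [DirPath.snocP]; rw [Fin.snoc_castSucc]⟩

lemma DirPath.snocP_pairs (p : DirPath A) (a : V) (ha : A (p.vtx (Fin.last p.len)) a)
    (hni : ∀ i, p.vtx i ≠ a) (Q : V → V → Prop)
    (hQ : ∀ i : Fin p.len, Q (p.vtx i.castSucc) (p.vtx i.succ))
    (hQ2 : Q (p.vtx (Fin.last p.len)) a) :
    ∀ i : Fin (p.len + 1),
      Q ((p.snocP a ha hni).vtx i.castSucc) ((p.snocP a ha hni).vtx i.succ) := by
  intro i
  induction i using Fin.lastCases with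
  | last =>
    simp only [DirPath.snocP]
    rw [Fin.succ_last, Fin.snoc_last, Fin.snoc_castSucc]
    exact hQ2
  | cast j =>
    simp only [DirPath.snocP]
    rw [Fin.succ_castSucc, Fin.snoc_castSucc, Fin.snoc_castSucc]
    exact hQ j

end PolytreeAux3


section PolytreeAux4

open SimpleGraph Finset

variable {A : V → V → Prop} [Fintype V] [DecidableEq V]

lemma pt_wArc_erase {X Y : Finset V} {x y : V} (hx : x ∈ X) (hy : y ∈ Y) (a b : V) :
    wArc A (X.erase x) (Y.erase y) a b =
      wArc A X Y a b - (if InCminus A a b x then 1 else 0) +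
        (if InCminus A a b y then 1 else 0) := by
  rw [wArc, wArc, Finset.filter_erase, Finset.filter_erase]
  have eX : (X.filter (fun z => InCminus A a b z)).card =
      (X.filter (InCminus A a b)).card := rfl
  have eY : (Y.filter (fun z => InCminus A a b z)).card =
      (Y.filter (InCminus A a b)).card := rfl
  have eX' : (X.filter (fun z => InCminus A a b z)).card =
      (X.filter (fun x => InCminus A a b x)).card := rfl
  have eY' : (Y.filter (fun z => InCminus A a b z)).card =
      (Y.filter (fun x => InCminus A a b x)).card := rfl
  by_cases hix : InCminus A a b x <;> by_cases hiy : InCminus A a b y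
  · rw [if_pos hix, if_pos hiy,
      Finset.card_erase_of_mem (Finset.mem_filter.mpr ⟨hx, hix⟩),
      Finset.card_erase_of_mem (Finset.mem_filter.mpr ⟨hy, hiy⟩)]
    have c1 : 1 ≤ (X.filter (fun z => InCminus A a b z)).card :=
      Finset.one_le_card.mpr ⟨x, Finset.mem_filter.mpr ⟨hx, hix⟩⟩
    have c2 : 1 ≤ (Y.filter (fun z => InCminus A a b z)).card :=
      Finset.one_le_card.mpr ⟨y, Finset.mem_filter.mpr ⟨hy, hiy⟩⟩
    omega
  · rw [if_pos hix, if_neg hiy,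
      Finset.card_erase_of_mem (Finset.mem_filter.mpr ⟨hx, hix⟩),
      Finset.erase_eq_of_notMem (fun hm => hiy (Finset.mem_filter.mp hm).2)]
    have c1 : 1 ≤ (X.filter (fun z => InCminus A a b z)).card :=
      Finset.one_le_card.mpr ⟨x, Finset.mem_filter.mpr ⟨hx, hix⟩⟩
    omega
  · rw [if_neg hix, if_pos hiy,
      Finset.erase_eq_of_notMem (fun hm => hix (Finset.mem_filter.mp hm).2),
      Finset.card_erase_of_mem (Finset.mem_filter.mpr ⟨hy, hiy⟩)]
    have c2 : 1 ≤ (Y.filter (fun z => InCminus A a b z)).card :=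
      Finset.one_le_card.mpr ⟨y, Finset.mem_filter.mpr ⟨hy, hiy⟩⟩
    omega
  · rw [if_neg hix, if_neg hiy,
      Finset.erase_eq_of_notMem (fun hm => hix (Finset.mem_filter.mp hm).2),
      Finset.erase_eq_of_notMem (fun hm => hiy (Finset.mem_filter.mp hm).2)]
    omega

lemma pt_preserve (hT : IsPolytree A) {X Y : Finset V} (p : DirPath A)
    (hw : ∀ a b, A a b → 0 ≤ wArc A X Y a b)
    (hp : ∀ i : Fin p.len, 1 ≤ wArc A X Y (p.vtx i.castSucc) (p.vtx i.succ))
    (hx : p.src ∈ X) (hy : p.snk ∈ Y) :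
    ∀ a b, A a b → 0 ≤ wArc A (X.erase p.src) (Y.erase p.snk) a b := by
  intro a b hab
  rw [pt_wArc_erase hx hy]
  by_cases hiy : InCminus A a b p.snk
  · have hix := pt_path_inc_src hT hab p hiy
    rw [if_pos hix, if_pos hiy]
    have := hw a b hab
    omega
  · rw [if_neg hiy]
    by_cases hix : InCminus A a b p.src
    · rw [if_pos hix]
      obtain ⟨i, h1, h2⟩ := pt_path_cross hT hab p hix hiy
      have := hp i
      rw [h1, h2] at this
      omega
    · rw [if_neg hix]
      have := hw a b hab
      omega

lemma pt_descend (hT : IsPolytree A) {X Y : Finset V} (hXY : X.card = Y.card)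
    (hw : ∀ a b, A a b → 0 ≤ wArc A X Y a b) :
    ∀ n (u v : V), (Finset.univ.filter fun x => InCminus A u v x).card ≤ n →
      A u v → 1 ≤ wArc A X Y u v →
      ∃ p : DirPath A, p.src ∈ X ∧ p.snk = u ∧ (∀ i, InCminus A u v (p.vtx i)) ∧
        ∀ i : Fin p.len, 1 ≤ wArc A X Y (p.vtx i.castSucc) (p.vtx i.succ) := by
  intro n
  induction n with
  | zero =>
    intro u v hcard huv _
    exfalso
    have hm : u ∈ Finset.univ.filter fun x => InCminus A u v x :=
      Finset.mem_filter.mpr ⟨Finset.mem_univ u, pt_inc_refl u v⟩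
    have := Finset.card_pos.mpr ⟨u, hm⟩
    omega
  | succ m ih =>
    intro u v hcard huv hw1
    by_cases huX : u ∈ X
    · exact ⟨DirPath.single A u, huX, rfl, fun _ => pt_inc_refl u v, fun i => i.elim0⟩
    · obtain ⟨t, htu, hwt⟩ := pt_exists_in_arc_sub hT hXY huX huv hw1 hw
      have htv : t ≠ v := fun h => hT.2.1 u v huv (h ▸ htu)
      have hsub : ∀ x, InCminus A t u x → InCminus A u v x := pt_inc_subset hT huv htu htv
      have hbridge : ¬ InCminus A t u u := pt_not_reach_del hT (pt_adj_of_arc hT htu)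
      have hstrict : (Finset.univ.filter fun x => InCminus A t u x).card <
          (Finset.univ.filter fun x => InCminus A u v x).card := by
        apply Finset.card_lt_card
        rw [Finset.ssubset_iff_of_subset (fun x hxm => Finset.mem_filter.mpr
          ⟨Finset.mem_univ x, hsub x (Finset.mem_filter.mp hxm).2⟩)]
        exact ⟨u, Finset.mem_filter.mpr ⟨Finset.mem_univ u, pt_inc_refl u v⟩,
          fun hm => hbridge (Finset.mem_filter.mp hm).2⟩
      obtain ⟨p, hpX, hpsnk, hpin, hpw⟩ := ih t u (by omega) htu hwt
      have ha : A (p.vtx (Fin.last p.len)) u := by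
        rw [show p.vtx (Fin.last p.len) = p.snk from rfl, hpsnk]
        exact htu
      have hni : ∀ i, p.vtx i ≠ u := fun i h => hbridge (h ▸ hpin i)
      refine ⟨p.snocP u ha hni, ?_, ?_, ?_, ?_⟩
      · rw [DirPath.snocP_src]
        exact hpX
      · exact DirPath.snocP_snk p u ha hni
      · intro i
        rcases DirPath.snocP_vtx p u ha hni i with ⟨j, hj⟩ | hj
        · rw [hj]
          exact hsub _ (hpin j)
        · rw [hj]
          exact pt_inc_refl u v
      · refine DirPath.snocP_pairs p u ha hni (fun c d => 1 ≤ wArc A X Y c d) hpw ?_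
        rw [show p.vtx (Fin.last p.len) = p.snk from rfl, hpsnk]
        exact hwt

lemma pt_exists_good_path (hT : IsPolytree A) {X Y : Finset V} (hXY : X.card = Y.card)
    (hw : ∀ a b, A a b → 0 ≤ wArc A X Y a b) {y : V} (hy : y ∈ Y) :
    ∃ p : DirPath A, p.src ∈ X ∧ p.snk = y ∧
      ∀ i : Fin p.len, 1 ≤ wArc A X Y (p.vtx i.castSucc) (p.vtx i.succ) := by
  by_cases hyX : y ∈ X
  · exact ⟨DirPath.single A y, hyX, rfl, fun i => i.elim0⟩
  · obtain ⟨u, huy, hwu⟩ := pt_exists_in_arc_top hT hXY hyX hy hw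
    obtain ⟨p, hpX, hpsnk, hpin, hpw⟩ := pt_descend hT hXY hw
      (Finset.univ.filter fun x => InCminus A u y x).card u y le_rfl huy hwu
    have hbridge : ¬ InCminus A u y y := pt_not_reach_del hT (pt_adj_of_arc hT huy)
    have ha : A (p.vtx (Fin.last p.len)) y := by
      rw [show p.vtx (Fin.last p.len) = p.snk from rfl, hpsnk]
      exact huy
    have hni : ∀ i, p.vtx i ≠ y := fun i h => hbridge (h ▸ hpin i)
    refine ⟨p.snocP y ha hni, ?_, DirPath.snocP_snk p y ha hni, ?_⟩
    · rw [DirPath.snocP_src]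
      exact hpX
    · refine DirPath.snocP_pairs p y ha hni (fun c d => 1 ≤ wArc A X Y c d) hpw ?_
      rw [show p.vtx (Fin.last p.len) = p.snk from rfl, hpsnk]
      exact hwu

lemma pt_buildDPM (hT : IsPolytree A) :
    ∀ (k : ℕ) (X Y : Finset V), X.card = k → Y.card = k →
      (∀ a b, A a b → 0 ≤ wArc A X Y a b) → ∃ P : Fin k → DirPath A, IsDPM X Y P := by
  intro k
  induction k with
  | zero =>
    intro X Y hX hY _
    refine ⟨fun i => i.elim0, fun i => i.elim0, fun i => i.elim0, ?_, ?_⟩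
    · rw [Finset.card_eq_zero.mp hX]
      simp
    · rw [Finset.card_eq_zero.mp hY]
      simp
  | succ m ih =>
    intro X Y hX hY hw
    obtain ⟨y, hy⟩ : Y.Nonempty := Finset.card_pos.mp (by omega)
    have hXY : X.card = Y.card := by omega
    obtain ⟨p, hpX, hpy, hpw⟩ := pt_exists_good_path hT hXY hw hy
    have hsnkY : p.snk ∈ Y := by rw [hpy]; exact hy
    have hw' := pt_preserve hT p hw hpw hpX hsnkY
    obtain ⟨P', i1, i2, i3, i4⟩ := ih (X.erase p.src) (Y.erase p.snk)
      (by rw [Finset.card_erase_of_mem hpX]; omega)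
      (by rw [Finset.card_erase_of_mem hsnkY]; omega) hw'
    have hsrc' : ∀ j : Fin m, (P' j).src ∈ X.erase p.src := by
      intro j
      rw [← i3]
      exact Finset.mem_image_of_mem _ (Finset.mem_univ j)
    have hsnk' : ∀ j : Fin m, (P' j).snk ∈ Y.erase p.snk := by
      intro j
      rw [← i4]
      exact Finset.mem_image_of_mem _ (Finset.mem_univ j)
    refine ⟨Fin.cons p P', ?_, ?_, ?_, ?_⟩
    · intro i j hij
      induction i using Fin.cases with
      | zero =>
        induction j using Fin.cases with
        | zero => rfl
        | succ j =>
          simp only [Fin.cons_zero, Fin.cons_succ] at hij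
          exact absurd hij.symm (Finset.mem_erase.mp (hsrc' j)).1
      | succ i =>
        induction j using Fin.cases with
        | zero =>
          simp only [Fin.cons_zero, Fin.cons_succ] at hij
          exact absurd hij (Finset.mem_erase.mp (hsrc' i)).1
        | succ j =>
          simp only [Fin.cons_succ] at hij
          rw [i1 hij]
    · intro i j hij
      induction i using Fin.cases with
      | zero =>
        induction j using Fin.cases with
        | zero => rfl
        | succ j =>
          simp only [Fin.cons_zero, Fin.cons_succ] at hij
          exact absurd hij.symm (Finset.mem_erase.mp (hsnk' j)).1
      | succ i =>
        induction j using Fin.cases with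
        | zero =>
          simp only [Fin.cons_zero, Fin.cons_succ] at hij
          exact absurd hij (Finset.mem_erase.mp (hsnk' i)).1
        | succ j =>
          simp only [Fin.cons_succ] at hij
          rw [i2 hij]
    · ext z
      simp only [Finset.mem_image, Finset.mem_univ, true_and]
      constructor
      · rintro ⟨i, rfl⟩
        induction i using Fin.cases with
        | zero =>
          rw [Fin.cons_zero]
          exact hpX
        | succ i =>
          rw [Fin.cons_succ]
          exact Finset.mem_of_mem_erase (hsrc' i)
      · intro hz
        by_cases hzp : z = p.src
        · exact ⟨0, by rw [Fin.cons_zero, hzp]⟩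
        · have hz' : z ∈ X.erase p.src := Finset.mem_erase.mpr ⟨hzp, hz⟩
          rw [← i3] at hz'
          obtain ⟨i, -, hi⟩ := Finset.mem_image.mp hz'
          exact ⟨i.succ, by rw [Fin.cons_succ, hi]⟩
    · ext z
      simp only [Finset.mem_image, Finset.mem_univ, true_and]
      constructor
      · rintro ⟨i, rfl⟩
        induction i using Fin.cases with
        | zero =>
          rw [Fin.cons_zero]
          exact hsnkY
        | succ i =>
          rw [Fin.cons_succ]
          exact Finset.mem_of_mem_erase (hsnk' i)
      · intro hz
        by_cases hzp : z = p.snk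
        · exact ⟨0, by rw [Fin.cons_zero, hzp]⟩
        · have hz' : z ∈ Y.erase p.snk := Finset.mem_erase.mpr ⟨hzp, hz⟩
          rw [← i4] at hz'
          obtain ⟨i, -, hi⟩ := Finset.mem_image.mp hz'
          exact ⟨i.succ, by rw [Fin.cons_succ, hi]⟩

end PolytreeAux4


/-- In a polytree, there is a directed path matching from `X` to `Y`
iff `w(e; X, Y) ≥ 0` for every arc `e`. -/
theorem stmt_1 [Fintype V] [DecidableEq V] (A : V → V → Prop) (hT : IsPolytree A)
    (X Y : Finset V) (hcard : X.card = Y.card) :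
    (∃ P : Fin X.card → DirPath A, IsDPM X Y P) ↔
      ∀ a b, A a b → 0 ≤ wArc A X Y a b := by
  constructor
  · rintro ⟨P, hi1, hi2, hi3, hi4⟩ a b hab
    rw [wArc, sub_nonneg, Nat.cast_le]
    have h1 : Y.filter (fun x => InCminus A a b x) =
        (Finset.univ.filter fun i => InCminus A a b ((P i).snk)).image fun i => (P i).snk := by
      conv_lhs => rw [← hi4]
      rw [Finset.filter_image]
    have h2 : X.filter (fun x => InCminus A a b x) =
        (Finset.univ.filter fun i => InCminus A a b ((P i).src)).image fun i => (P i).src := by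
      conv_lhs => rw [← hi3]
      rw [Finset.filter_image]
    rw [h1, h2, Finset.card_image_of_injective _ hi2, Finset.card_image_of_injective _ hi1]
    apply Finset.card_le_card
    intro i hi
    rw [Finset.mem_filter] at hi ⊢
    exact ⟨hi.1, pt_path_inc_src hT hab (P i) hi.2⟩
  · intro hw
    exact pt_buildDPM hT X.card X Y rfl hcard.symm hw
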